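/- Let X be a compact, totally disconnected metric space (equivalently, a compact metric space of covering dimension zero), let A be a unital C*-algebra, let l ≥ 1, and let a, b ∈ C(X, M_l(A))_+. Then a is Cuntz subequivalent to b in C(X, M_l(A)) if and only if a(x) is Cuntz subequivalent to b(x) in M_l(A) for every x ∈ X. -/

import Mathlib

open Filter Topology

/-- A positive element of a C*-algebra: one of the form `y* y`. -/
def IsPositiveElem {D : Type*} [Mul D] [Star D] (a : D) : Prop :=
  ∃ y : D, a = star y * y

/-- Cuntz subequivalence in `D`: `a ≾_D b` iff there is a sequence `(cₙ)` in `D` with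
`cₙ * b * cₙ* → a`. -/
def CuntzSub {D : Type*} [Mul D] [Star D] [TopologicalSpace D] (a b : D) : Prop :=
  ∃ c : ℕ → D, Tendsto (fun n => c n * b * star (c n)) atTop (nhds a)

/-- Let `X` be a compact, totally disconnected metric space (equivalently, a compact metric
space of covering dimension zero), let `A` be a unital C*-algebra, let `l ≥ 1`, and let
`a, b ∈ C(X, Mₗ(A))₊`.  Then `a ≾ b` in `C(X, Mₗ(A))` if and only if `a(x) ≾ b(x)` in `Mₗ(A)`
for every `x ∈ X`. -/
theorem cuntzSub_iff_pointwise_of_totallyDisconnected (X : Type*) [MetricSpace X]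
    [CompactSpace X] [TotallyDisconnectedSpace X] (A : Type*) [CStarAlgebra A]
    (l : ℕ) (hl : 1 ≤ l) (a b : C(X, Matrix (Fin l) (Fin l) A))
    (ha : IsPositiveElem a) (hb : IsPositiveElem b) :
    CuntzSub a b ↔ ∀ x : X, CuntzSub (a x) (b x) := by
  classical
  set M := Matrix (Fin l) (Fin l) A with hM
  letI : MetricSpace M := (inferInstance : MetricSpace (Fin l → Fin l → A))
  constructor
  · rintro ⟨c, hc⟩ x
    refine ⟨fun n => c n x, ?_⟩
    have hev : Continuous fun f : C(X, M) => f x := continuous_eval_const x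
    exact (hev.tendsto a).comp hc
  · intro h
    -- key lemma
    have key : ∀ ε : ℝ, 0 < ε → ∃ c : C(X, M),
        ∀ x : X, dist (c x * b x * star (c x)) (a x) < ε := by
      intro ε hε
      rcases isEmpty_or_nonempty X with hX | hX
      · exact ⟨0, fun x => isEmptyElim x⟩
      -- pointwise witnesses
      have hcx : ∀ x : X, ∃ d : M, dist (d * b x * star d) (a x) < ε := by
        intro x
        obtain ⟨s, hs⟩ := h x
        obtain ⟨n, hn⟩ := (Metric.tendsto_nhds.mp hs ε hε).exists
        exact ⟨s n, hn⟩
      choose cx hcxd using hcx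
      -- open sets
      set U : X → Set X := fun x => {z | dist (cx x * b z * star (cx x)) (a z) < ε} with hU
      have hUopen : ∀ x, IsOpen (U x) := by
        intro x
        have hcont : Continuous fun z : X => dist (cx x * b z * star (cx x)) (a z) := by
          apply Continuous.dist
          · exact ((continuous_const.mul b.continuous).mul
              (continuous_star.comp continuous_const))
          · exact a.continuous
        exact isOpen_lt hcont continuous_const
      have hxU : ∀ x, x ∈ U x := fun x => hcxd x
      -- clopen refinement
      have hclop : ∀ x : X, ∃ V : Set X, IsClopen V ∧ x ∈ V ∧ V ⊆ U x := fun x =>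
        compact_exists_isClopen_in_isOpen (hUopen x) (hxU x)
      choose V hVclop hxV hVU using hclop
      -- finite subcover
      obtain ⟨t, ht⟩ := isCompact_univ.elim_finite_subcover V (fun x => (hVclop x).2)
        (fun y _ => Set.mem_iUnion.2 ⟨y, hxV y⟩)
      set L : List X := t.toList with hL
      have hex : ∀ y : X, ∃ x ∈ L, (decide (y ∈ V x)) = true := by
        intro y
        obtain ⟨x, hx, hyx⟩ := Set.mem_iUnion₂.1 (ht (Set.mem_univ y))
        exact ⟨x, Finset.mem_toList.2 hx, decide_eq_true hyx⟩
      set f : X → ℕ := fun y => L.findIdx (fun x => decide (y ∈ V x)) with hf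
      have hflt : ∀ y, f y < L.length := fun y => List.findIdx_lt_length_of_exists (hex y)
      set g : X → M := fun y => cx (L.get ⟨f y, hflt y⟩) with hg
      have hmemV : ∀ y, y ∈ V (L.get ⟨f y, hflt y⟩) := by
        intro y
        have := @List.findIdx_getElem _ (fun x => decide (y ∈ V x)) L (hflt y)
        exact of_decide_eq_true this
      have hnot : ∀ y, ∀ j : ℕ, ∀ hj : j < f y, y ∉ V (L[j]'(lt_trans hj (hflt y))) := by
        intro y j hj hmem
        have := List.not_of_lt_findIdx (p := fun x => decide (y ∈ V x)) (xs := L) hj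
        simp [hmem] at this
      have hgc : Continuous g := by
        apply IsLocallyConstant.continuous
        rw [IsLocallyConstant.iff_exists_open]
        intro y
        refine ⟨V (L.get ⟨f y, hflt y⟩) ∩
          ⋂ j : Fin (f y), (V (L[(j : ℕ)]'(lt_trans j.2 (hflt y))))ᶜ, ?_, ?_, ?_⟩
        · exact ((hVclop _).2).inter (isOpen_iInter_of_finite fun j =>
            (hVclop _).1.isOpen_compl)
        · exact ⟨hmemV y, Set.mem_iInter.2 fun j => hnot y j j.2⟩
        · intro z hz
          obtain ⟨hz1, hz2⟩ := hz
          have hfz : f z = f y := by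
            rw [hf]
            rw [List.findIdx_eq (hflt y)]
            constructor
            · exact decide_eq_true hz1
            · intro j hj
              have : z ∉ V (L[j]'(lt_trans hj (hflt y))) :=
                Set.mem_iInter.1 hz2 ⟨j, hj⟩
              exact decide_eq_false this
          have hfin : (⟨f z, hflt z⟩ : Fin L.length) = ⟨f y, hflt y⟩ := Fin.ext hfz
          simp only [hg, hfin]
      refine ⟨⟨g, hgc⟩, ?_⟩
      intro y
      have : y ∈ U (L.get ⟨f y, hflt y⟩) := hVU _ (hmemV y)
      exact this
    -- build the sequence
    have hkey : ∀ n : ℕ, ∃ c : C(X, M),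
        ∀ x : X, dist (c x * b x * star (c x)) (a x) < 1 / (n + 1) := fun n =>
      key (1 / (n + 1)) (by positivity)
    choose c hc using hkey
    refine ⟨c, ?_⟩
    letI : PseudoMetricSpace C(X, M) := ContinuousMap.instPseudoMetricSpace X M
    refine Metric.tendsto_nhds.mpr ?_
    intro ε hε
    obtain ⟨N, hN⟩ := exists_nat_one_div_lt hε
    rw [eventually_atTop]
    refine ⟨N, fun n hn => ?_⟩
    refine (ContinuousMap.dist_lt_iff hε).mpr ?_
    intro x
    calc dist ((c n * b * star (c n)) x) (a x)
        = dist (c n x * b x * star (c n x)) (a x) := rfl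
      _ < 1 / (n + 1) := hc n x
      _ ≤ 1 / (N + 1) := by
          apply one_div_le_one_div_of_le (by positivity)
          exact_mod_cast by omega
      _ < ε := hN
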